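/- For all w,w1,w2,w3 ∈ G(d) one has ∇̃_w(R(w1,w2)w3) − R(∇̃_w w1, w2)w3 − R(w1, ∇̃_w w2)w3 − R(w1,w2)(∇̃_w w3) = 0; that is, the curvature tensor R is parallel with respect to the connection ∇̃ (∇̃R = 0). -/
import Mathlib

open Module

variable {H D : Type} [LieRing H] [LieAlgebra ℝ H] [FiniteDimensional ℝ H]
  [LieRing D] [LieAlgebra ℝ D] [FiniteDimensional ℝ D]

/-- `beta BD π x y` is the element `β(x,y)` of `h*` given by `a ↦ ⟨π(a)x, y⟩_d`. -/
def beta (BD : LinearMap.BilinForm ℝ D) (π : H →ₗ[ℝ] D →ₗ[ℝ] D) (x y : D) : Dual ℝ H :=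
  (BD.flip y).comp (π.flip x)

/-- The bracket on `G(d) = d ⊕ h*`: `[x₁+α₁, x₂+α₂] = [x₁,x₂]_d + β(x₁,x₂)`. -/
def gbr (BD : LinearMap.BilinForm ℝ D) (π : H →ₗ[ℝ] D →ₗ[ℝ] D)
    (u v : D × Dual ℝ H) : D × Dual ℝ H :=
  (⁅u.1, v.1⁆, beta BD π u.1 v.1)

/-- The inverse of the isomorphism `ℓ : h → h*`, `ℓ(h) = ⟨h,·⟩_h`. -/
noncomputable def ellInv (BH : LinearMap.BilinForm ℝ H) (hBH : BH.Nondegenerate)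
    (α : Dual ℝ H) : H :=
  (LinearMap.BilinForm.toDual BH hBH).symm α

/-- The Levi-Civita connection
`∇_{x₁+ℓ(h₁)}(x₂+ℓ(h₂)) = ½([x₁,x₂]_d + β(x₁,x₂) − π(h₁)x₂ − π(h₂)x₁)`. -/
noncomputable def nabG (BH : LinearMap.BilinForm ℝ H) (hBH : BH.Nondegenerate)
    (BD : LinearMap.BilinForm ℝ D) (π : H →ₗ[ℝ] D →ₗ[ℝ] D)
    (u v : D × Dual ℝ H) : D × Dual ℝ H :=
  ((2⁻¹ : ℝ) • (⁅u.1, v.1⁆ - π (ellInv BH hBH u.2) v.1 - π (ellInv BH hBH v.2) u.1),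
   (2⁻¹ : ℝ) • beta BD π u.1 v.1)

/-- The curvature `R(w₁,w₂)w₃ = ∇_{w₁}∇_{w₂}w₃ − ∇_{w₂}∇_{w₁}w₃ − ∇_{[w₁,w₂]}w₃`. -/
noncomputable def Rfun (BH : LinearMap.BilinForm ℝ H) (hBH : BH.Nondegenerate)
    (BD : LinearMap.BilinForm ℝ D) (π : H →ₗ[ℝ] D →ₗ[ℝ] D)
    (w₁ w₂ w₃ : D × Dual ℝ H) : D × Dual ℝ H :=
  nabG BH hBH BD π w₁ (nabG BH hBH BD π w₂ w₃)
    - nabG BH hBH BD π w₂ (nabG BH hBH BD π w₁ w₃)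
    - nabG BH hBH BD π (gbr BD π w₁ w₂) w₃

/-- The connection `∇̃ = T − ∇`: `∇̃_{x₁+ℓ(h₁)}(x₂+ℓ(h₂)) = π(h₁)x₂ + ℓ([h₁,h₂]_h)`. -/
noncomputable def tnab (BH : LinearMap.BilinForm ℝ H) (hBH : BH.Nondegenerate)
    (π : H →ₗ[ℝ] D →ₗ[ℝ] D) (u v : D × Dual ℝ H) : D × Dual ℝ H :=
  (π (ellInv BH hBH u.2) v.1, BH ⁅ellInv BH hBH u.2, ellInv BH hBH v.2⁆)

lemma ellInv_BH (BH : LinearMap.BilinForm ℝ H) (hBH : BH.Nondegenerate) (x : H) :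
    ellInv BH hBH (BH x) = x := by
  have : (LinearMap.BilinForm.toDual BH hBH) x = BH x := rfl
  rw [ellInv, ← this, LinearEquiv.symm_apply_apply]

lemma BH_ellInv (BH : LinearMap.BilinForm ℝ H) (hBH : BH.Nondegenerate) (α : Dual ℝ H) (a : H) :
    BH (ellInv BH hBH α) a = α a :=
  LinearMap.BilinForm.apply_toDual_symm_apply α a

lemma tnab_sub (BH : LinearMap.BilinForm ℝ H) (hBH : BH.Nondegenerate)
    (π : H →ₗ[ℝ] D →ₗ[ℝ] D) (w u v : D × Dual ℝ H) :
    tnab BH hBH π w (u - v) = tnab BH hBH π w u - tnab BH hBH π w v := by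
  simp [tnab, ellInv, map_sub, lie_sub, Prod.ext_iff]

/-- Key Leibniz identity for `β`. -/
lemma beta_deriv (BH : LinearMap.BilinForm ℝ H) (hBH : BH.Nondegenerate)
    (hBHinv : ∀ a b c : H, BH ⁅a, b⁆ c = - BH b ⁅a, c⁆)
    (BD : LinearMap.BilinForm ℝ D) (π : H →ₗ[ℝ] D →ₗ[ℝ] D)
    (hπhom : ∀ a b : H, π ⁅a, b⁆ = π a ∘ₗ π b - π b ∘ₗ π a)
    (hπskew : ∀ a : H, ∀ x y : D, BD (π a x) y = - BD x (π a y))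
    (h : H) (x y : D) :
    BH ⁅h, ellInv BH hBH (beta BD π x y)⁆
      = beta BD π (π h x) y + beta BD π x (π h y) := by
  apply LinearMap.ext
  intro a
  have h1 : BH ⁅h, ellInv BH hBH (beta BD π x y)⁆ a
      = - BH (ellInv BH hBH (beta BD π x y)) ⁅h, a⁆ := hBHinv _ _ _
  have h2 : BH (ellInv BH hBH (beta BD π x y)) ⁅h, a⁆ = BD (π ⁅h, a⁆ x) y :=
    BH_ellInv BH hBH _ _
  have h3 : π ⁅h, a⁆ x = π h (π a x) - π a (π h x) := by
    rw [hπhom]; rfl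
  have h4 : BD (π h (π a x)) y = - BD (π a x) (π h y) := hπskew _ _ _
  have hb : ∀ (u v : D) (c : H), beta BD π u v c = BD (π c u) v := fun _ _ _ => rfl
  rw [LinearMap.add_apply, hb, hb, h1, h2, h3, map_sub, LinearMap.sub_apply, h4]
  ring

lemma gbr_deriv (BH : LinearMap.BilinForm ℝ H) (hBH : BH.Nondegenerate)
    (hBHinv : ∀ a b c : H, BH ⁅a, b⁆ c = - BH b ⁅a, c⁆)
    (BD : LinearMap.BilinForm ℝ D) (π : H →ₗ[ℝ] D →ₗ[ℝ] D)
    (hπder : ∀ a : H, ∀ x y : D, π a ⁅x, y⁆ = ⁅π a x, y⁆ + ⁅x, π a y⁆)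
    (hπhom : ∀ a b : H, π ⁅a, b⁆ = π a ∘ₗ π b - π b ∘ₗ π a)
    (hπskew : ∀ a : H, ∀ x y : D, BD (π a x) y = - BD x (π a y))
    (w u v : D × Dual ℝ H) :
    tnab BH hBH π w (gbr BD π u v)
      = gbr BD π (tnab BH hBH π w u) v + gbr BD π u (tnab BH hBH π w v) := by
  refine Prod.ext ?_ ?_
  · simpa [tnab, gbr] using hπder (ellInv BH hBH w.2) u.1 v.1
  · simpa [tnab, gbr] using
      beta_deriv BH hBH hBHinv BD π hπhom hπskew (ellInv BH hBH w.2) u.1 v.1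

lemma nab_deriv (BH : LinearMap.BilinForm ℝ H) (hBH : BH.Nondegenerate)
    (hBHinv : ∀ a b c : H, BH ⁅a, b⁆ c = - BH b ⁅a, c⁆)
    (BD : LinearMap.BilinForm ℝ D) (π : H →ₗ[ℝ] D →ₗ[ℝ] D)
    (hπder : ∀ a : H, ∀ x y : D, π a ⁅x, y⁆ = ⁅π a x, y⁆ + ⁅x, π a y⁆)
    (hπhom : ∀ a b : H, π ⁅a, b⁆ = π a ∘ₗ π b - π b ∘ₗ π a)
    (hπskew : ∀ a : H, ∀ x y : D, BD (π a x) y = - BD x (π a y))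
    (w u v : D × Dual ℝ H) :
    tnab BH hBH π w (nabG BH hBH BD π u v)
      = nabG BH hBH BD π (tnab BH hBH π w u) v
        + nabG BH hBH BD π u (tnab BH hBH π w v) := by
  set h := ellInv BH hBH w.2 with hh
  refine Prod.ext ?_ ?_
  · show π h ((2⁻¹ : ℝ) • (⁅u.1, v.1⁆ - π (ellInv BH hBH u.2) v.1 - π (ellInv BH hBH v.2) u.1))
      = (2⁻¹ : ℝ) • (⁅π h u.1, v.1⁆
          - π (ellInv BH hBH (BH ⁅h, ellInv BH hBH u.2⁆)) v.1
          - π (ellInv BH hBH v.2) (π h u.1))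
        + (2⁻¹ : ℝ) • (⁅u.1, π h v.1⁆
          - π (ellInv BH hBH u.2) (π h v.1)
          - π (ellInv BH hBH (BH ⁅h, ellInv BH hBH v.2⁆)) u.1)
    rw [ellInv_BH, ellInv_BH]
    have e1 : π ⁅h, ellInv BH hBH u.2⁆ v.1
        = π h (π (ellInv BH hBH u.2) v.1) - π (ellInv BH hBH u.2) (π h v.1) := by
      rw [hπhom]; rfl
    have e2 : π ⁅h, ellInv BH hBH v.2⁆ u.1
        = π h (π (ellInv BH hBH v.2) u.1) - π (ellInv BH hBH v.2) (π h u.1) := by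
      rw [hπhom]; rfl
    rw [e1, e2, map_smul, map_sub, map_sub, hπder]
    module
  · show BH ⁅h, ellInv BH hBH ((2⁻¹ : ℝ) • beta BD π u.1 v.1)⁆
      = (2⁻¹ : ℝ) • beta BD π (π h u.1) v.1 + (2⁻¹ : ℝ) • beta BD π u.1 (π h v.1)
    have : ellInv BH hBH ((2⁻¹ : ℝ) • beta BD π u.1 v.1)
        = (2⁻¹ : ℝ) • ellInv BH hBH (beta BD π u.1 v.1) := by
      simp [ellInv, map_smul]
    rw [this, lie_smul, map_smul,
      beta_deriv BH hBH hBHinv BD π hπhom hπskew h u.1 v.1, smul_add]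

lemma nab_add_left (BH : LinearMap.BilinForm ℝ H) (hBH : BH.Nondegenerate)
    (BD : LinearMap.BilinForm ℝ D) (π : H →ₗ[ℝ] D →ₗ[ℝ] D)
    (a b c : D × Dual ℝ H) :
    nabG BH hBH BD π (a + b) c = nabG BH hBH BD π a c + nabG BH hBH BD π b c := by
  refine Prod.ext ?_ ?_
  · show (2⁻¹ : ℝ) • (⁅a.1 + b.1, c.1⁆ - π (ellInv BH hBH (a.2 + b.2)) c.1
        - π (ellInv BH hBH c.2) (a.1 + b.1)) = _
    have : ellInv BH hBH (a.2 + b.2) = ellInv BH hBH a.2 + ellInv BH hBH b.2 := by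
      simp [ellInv, map_add]
    rw [this, map_add, LinearMap.add_apply, add_lie, map_add]
    show _ = (2⁻¹ : ℝ) • (⁅a.1, c.1⁆ - π (ellInv BH hBH a.2) c.1 - π (ellInv BH hBH c.2) a.1)
        + (2⁻¹ : ℝ) • (⁅b.1, c.1⁆ - π (ellInv BH hBH b.2) c.1 - π (ellInv BH hBH c.2) b.1)
    module
  · show (2⁻¹ : ℝ) • beta BD π (a.1 + b.1) c.1
      = (2⁻¹ : ℝ) • beta BD π a.1 c.1 + (2⁻¹ : ℝ) • beta BD π b.1 c.1
    have : beta BD π (a.1 + b.1) c.1 = beta BD π a.1 c.1 + beta BD π b.1 c.1 := by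
      apply LinearMap.ext; intro t
      simp [beta, map_add]
    rw [this, smul_add]

lemma nab_add_right (BH : LinearMap.BilinForm ℝ H) (hBH : BH.Nondegenerate)
    (BD : LinearMap.BilinForm ℝ D) (π : H →ₗ[ℝ] D →ₗ[ℝ] D)
    (a b c : D × Dual ℝ H) :
    nabG BH hBH BD π a (b + c) = nabG BH hBH BD π a b + nabG BH hBH BD π a c := by
  refine Prod.ext ?_ ?_
  · show (2⁻¹ : ℝ) • (⁅a.1, b.1 + c.1⁆ - π (ellInv BH hBH a.2) (b.1 + c.1)
        - π (ellInv BH hBH (b.2 + c.2)) a.1) = _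
    have : ellInv BH hBH (b.2 + c.2) = ellInv BH hBH b.2 + ellInv BH hBH c.2 := by
      simp [ellInv, map_add]
    rw [this]
    simp only [map_add, LinearMap.add_apply, lie_add]
    show _ = (2⁻¹ : ℝ) • (⁅a.1, b.1⁆ - π (ellInv BH hBH a.2) b.1 - π (ellInv BH hBH b.2) a.1)
        + (2⁻¹ : ℝ) • (⁅a.1, c.1⁆ - π (ellInv BH hBH a.2) c.1 - π (ellInv BH hBH c.2) a.1)
    module
  · show (2⁻¹ : ℝ) • beta BD π a.1 (b.1 + c.1)
      = (2⁻¹ : ℝ) • beta BD π a.1 b.1 + (2⁻¹ : ℝ) • beta BD π a.1 c.1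
    have : beta BD π a.1 (b.1 + c.1) = beta BD π a.1 b.1 + beta BD π a.1 c.1 := by
      apply LinearMap.ext; intro t
      simp [beta, map_add]
    rw [this, smul_add]

/-- The curvature `R` is parallel for `∇̃`: `∇̃R = 0`. -/
theorem Rfun_parallel
    (BH : LinearMap.BilinForm ℝ H)
    (hBHsymm : ∀ a b : H, BH a b = BH b a)
    (hBHnd : BH.Nondegenerate)
    (hBHinv : ∀ a b c : H, BH ⁅a, b⁆ c = - BH b ⁅a, c⁆)
    (BD : LinearMap.BilinForm ℝ D)
    (hBDsymm : ∀ x y : D, BD x y = BD y x)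
    (hBDnd : BD.Nondegenerate)
    (hBDinv : ∀ x y z : D, BD ⁅x, y⁆ z = - BD y ⁅x, z⁆)
    (π : H →ₗ[ℝ] D →ₗ[ℝ] D)
    (hπder : ∀ a : H, ∀ x y : D, π a ⁅x, y⁆ = ⁅π a x, y⁆ + ⁅x, π a y⁆)
    (hπhom : ∀ a b : H, π ⁅a, b⁆ = π a ∘ₗ π b - π b ∘ₗ π a)
    (hπskew : ∀ a : H, ∀ x y : D, BD (π a x) y = - BD x (π a y)) :
    ∀ w w₁ w₂ w₃ : D × Dual ℝ H,
      tnab BH hBHnd π w (Rfun BH hBHnd BD π w₁ w₂ w₃)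
        - Rfun BH hBHnd BD π (tnab BH hBHnd π w w₁) w₂ w₃
        - Rfun BH hBHnd BD π w₁ (tnab BH hBHnd π w w₂) w₃
        - Rfun BH hBHnd BD π w₁ w₂ (tnab BH hBHnd π w w₃) = 0 := by
  intro w w₁ w₂ w₃
  have hn := nab_deriv BH hBHnd hBHinv BD π hπder hπhom hπskew w
  have hg := gbr_deriv BH hBHnd hBHinv BD π hπder hπhom hπskew w
  have hs := tnab_sub BH hBHnd π w
  have ha := nab_add_left BH hBHnd BD π
  have ha' := nab_add_right BH hBHnd BD π
  simp only [Rfun, hs, hn, hg, ha, ha']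
  abel
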